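/- Let A : ℕ → ℕ be defined by A(0) = 1, A(1) = 2, and A(n) = 1 + C(A(n−2)+1, 2) + A(n−2)·(A(n−1) − A(n−2)) for n ≥ 2, and for n ≥ 2 let E(n) = log(1 + 1/(2·A(n−1)) − A(n−2)/(2·A(n−1)) + 1/(A(n−1)·A(n−2))). Let ψ = (1−√5)/2. Then the sequence n ↦ ∑_{i=2}^{n} E(i)·ψ^{n−i+1} converges to a finite limit as n → ∞. -/

import Mathlib

open Filter

def A : ℕ → ℕ
  | 0 => 1
  | 1 => 2
  | n + 2 => 1 + Nat.choose (A n + 1) 2 + A n * (A (n + 1) - A n)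

lemma A0 : A 0 = 1 := rfl
lemma A1 : A 1 = 2 := rfl
lemma A2 : A 2 = 3 := rfl
lemma A3 : A 3 = 6 := rfl
lemma A4 : A 4 = 16 := rfl

lemma A_pos (n : ℕ) : 1 ≤ A n := by
  match n with
  | 0 => norm_num [A0]
  | 1 => norm_num [A1]
  | n + 2 => rw [A]; omega

lemma A_choose (n : ℕ) : A n ≤ Nat.choose (A n + 1) 2 := by
  rw [Nat.choose_two_right, Nat.add_sub_cancel, Nat.le_div_iff_mul_le two_pos]
  nlinarith [A_pos n]

lemma A_lt (n : ℕ) : A n < A (n + 1) := by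
  induction n with
  | zero => norm_num [A0, A1]
  | succ n ih =>
    have h1 := A_pos n
    have h2 := A_choose n
    have h3 : A (n+1) - A n ≤ A n * (A (n+1) - A n) :=
      Nat.le_mul_of_pos_left _ h1
    show A (n+1) < A (n+2)
    rw [A]
    omega

lemma A_mono : Monotone A := monotone_nat_of_le_succ fun n => (A_lt n).le

lemma A_two_choose (n : ℕ) : 2 * Nat.choose (A n + 1) 2 = (A n + 1) * A n := by
  rw [Nat.choose_two_right, Nat.add_sub_cancel, Nat.mul_div_cancel']
  rw [mul_comm]
  exact (Nat.even_mul_succ_self (A n)).two_dvd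

lemma A_growth (n : ℕ) : A n * A (n + 1) ≤ 2 * A (n + 2) := by
  obtain ⟨d, hd⟩ : ∃ d, A (n+1) = A n + d := ⟨A (n+1) - A n, by have := (A_lt n).le; omega⟩
  have h2 := A_two_choose n
  rw [A, hd, Nat.add_sub_cancel_left]
  nlinarith [A_pos n]

lemma A_exp (n : ℕ) : 2 ^ n ≤ A (n + 2) := by
  induction n using Nat.strong_induction_on with
  | _ n ih =>
    match n with
    | 0 => norm_num [A2]
    | 1 => norm_num [A3]
    | 2 => norm_num [A4]
    | (m+3) =>
      show 2 ^ (m+3) ≤ A (m+5)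
      have h1 : 2 ^ (m+1) ≤ A (m+3) := ih (m+1) (by omega)
      have h2 : A (m+3) * A (m+4) ≤ 2 * A (m+5) := A_growth (m+3)
      have h3 : 8 ≤ A (m+4) := le_trans (by norm_num [A4]) (A_mono (by omega : 4 ≤ m+4))
      have h4 : 2 * 2 ^ (m+3) ≤ 2 * A (m+5) := by
        calc 2 * 2 ^ (m+3) = 2 ^ (m+1) * 8 := by ring
          _ ≤ A (m+3) * A (m+4) := Nat.mul_le_mul h1 h3
          _ ≤ 2 * A (m+5) := h2
      omega

noncomputable def E (n : ℕ) : ℝ :=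
  Real.log (1 + 1 / (2 * (A (n - 1) : ℝ)) - (A (n - 2) : ℝ) / (2 * (A (n - 1) : ℝ))
    + 1 / ((A (n - 1) : ℝ) * (A (n - 2) : ℝ)))

noncomputable def ψ : ℝ := (1 - Real.sqrt 5) / 2

lemma abs_log_le {y : ℝ} (hy : 1/2 ≤ y) : |Real.log y| ≤ 2 * |y - 1| := by
  have hy0 : 0 < y := by linarith
  have h1 : Real.log y ≤ y - 1 := Real.log_le_sub_one_of_pos hy0
  have h2 : Real.log y⁻¹ ≤ y⁻¹ - 1 := Real.log_le_sub_one_of_pos (by positivity)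
  rw [Real.log_inv] at h2
  have h3 : y⁻¹ - 1 = (1 - y) / y := by field_simp
  have habs := abs_nonneg (y - 1)
  rw [abs_le]
  constructor
  · have h4 : (1 - y) / y ≤ 2 * |y - 1| := by
      rcases le_total y 1 with h | h
      · rw [abs_of_nonpos (by linarith)]
        rw [div_le_iff₀ hy0]
        nlinarith
      · have h5 : (1 - y) / y ≤ 0 :=
          div_nonpos_of_nonpos_of_nonneg (by linarith) hy0.le
        linarith
    rw [h3] at h2
    linarith
  · calc Real.log y ≤ y - 1 := h1
      _ ≤ |y - 1| := le_abs_self _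
      _ ≤ 2 * |y - 1| := by linarith

lemma E_bound (n : ℕ) : |E (n+2)| ≤ 4 * ((A n : ℝ) / (A (n+1) : ℝ)) := by
  have hb1 : (1:ℝ) ≤ (A n : ℝ) := by exact_mod_cast A_pos n
  have hab : (A n : ℝ) ≤ (A (n+1) : ℝ) := by exact_mod_cast (A_lt n).le
  have hE : E (n+2) = Real.log (1 + 1 / (2 * (A (n+1) : ℝ))
      - (A n : ℝ) / (2 * (A (n+1) : ℝ)) + 1 / ((A (n+1) : ℝ) * (A n : ℝ))) := rfl
  set b := (A n : ℝ) with hbdef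
  set a := (A (n+1) : ℝ) with hadef
  have ha1 : (1:ℝ) ≤ a := le_trans hb1 hab
  have ha0 : (0:ℝ) < a := by linarith
  have hb0 : (0:ℝ) < b := by linarith
  set y := 1 + 1/(2*a) - b/(2*a) + 1/(a*b) with hy
  have f1 : b/(2*a) ≤ 1/2 := by
    rw [div_le_div_iff₀ (by positivity) (by norm_num)]; linarith
  have f2 : (0:ℝ) < 1/(2*a) := by positivity
  have f3 : (0:ℝ) < 1/(a*b) := by positivity
  have f0 : (0:ℝ) ≤ b/(2*a) := by positivity
  have hyh : 1/2 ≤ y := by rw [hy]; linarith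
  have f4 : 1/(2*a) ≤ b/(2*a) := by gcongr
  have f5 : 1/(a*b) ≤ 1/a := by
    gcongr
    nlinarith
  have f6 : 1/a ≤ b/a := by gcongr
  have f7 : b/(2*a) = (b/a)/2 := by
    ring
  have habs : |y - 1| ≤ 2 * (b/a) := by
    rw [abs_le]
    constructor
    · rw [hy]; linarith
    · rw [hy]; linarith
  have := abs_log_le hyh
  rw [hE]
  calc |Real.log y| ≤ 2 * |y - 1| := this
    _ ≤ 2 * (2 * (b/a)) := by linarith
    _ = 4 * (b/a) := by ring

lemma ratio_bound (n : ℕ) : (A n : ℝ) / (A (n+1) : ℝ) ≤ 64 * (1/2 : ℝ)^(n+2) := by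
  rcases n with _|(_|(_|m))
  · norm_num [A0, A1]
  · norm_num [A1, A2]
  · norm_num [A2, A3]
  · show (A (m+3) : ℝ) / (A (m+4) : ℝ) ≤ 64 * (1/2 : ℝ)^(m+5)
    have hg : (A (m+2) : ℝ) * (A (m+3) : ℝ) ≤ 2 * (A (m+4) : ℝ) := by
      exact_mod_cast A_growth (m+2)
    have he : (2:ℝ)^m ≤ (A (m+2) : ℝ) := by exact_mod_cast A_exp m
    have hb1 : (1:ℝ) ≤ (A (m+3) : ℝ) := by exact_mod_cast A_pos (m+3)
    have ha0 : (0:ℝ) < (A (m+4) : ℝ) := by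
      have := A_pos (m+4); exact_mod_cast Nat.lt_of_lt_of_le Nat.zero_lt_one this
    have hb0 : (0:ℝ) < (A (m+3) : ℝ) := by linarith
    have ht0 : (0:ℝ) < (2:ℝ)^m := by positivity
    have h2 : (2:ℝ)^m * (A (m+3):ℝ) ≤ 2 * (A (m+4):ℝ) :=
      le_trans (by nlinarith) hg
    rw [div_le_iff₀ ha0]
    have hq : ((1/2:ℝ))^(m+5) * 2^m * 32 = 1 := by
      rw [show (32:ℝ) = 2^5 by norm_num, mul_assoc, ← pow_add, ← mul_pow]
      norm_num
    have hp0 : (0:ℝ) < ((1/2:ℝ))^(m+5) := by positivity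
    have h5 := mul_le_mul_of_nonneg_left h2 hp0.le
    have h6 : (((1/2:ℝ))^(m+5) * 2^m * 32) * (A (m+3):ℝ) = (A (m+3):ℝ) := by
      rw [hq, one_mul]
    nlinarith [h5, h6]

lemma E_bound' (i : ℕ) (hi : 2 ≤ i) : |E i| ≤ 256 * (1/2 : ℝ)^i := by
  obtain ⟨k, rfl⟩ : ∃ k, i = k + 2 := ⟨i - 2, by omega⟩
  calc |E (k+2)| ≤ 4 * ((A k : ℝ) / (A (k+1) : ℝ)) := E_bound k
    _ ≤ 4 * (64 * (1/2)^(k+2)) := by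
        have := ratio_bound k; linarith
    _ = 256 * (1/2)^(k+2) := by ring

lemma psi_abs : |ψ| ≤ (7/10 : ℝ) := by
  have hs := Real.sq_sqrt (by norm_num : (0:ℝ) ≤ 5)
  have hn := Real.sqrt_nonneg 5
  have h1 : Real.sqrt 5 ≤ 2.4 := by nlinarith
  have h2 : 1 ≤ Real.sqrt 5 := by nlinarith
  rw [ψ, abs_of_nonpos (by linarith)]
  norm_num
  linarith

theorem stmt_9 :
    ∃ L : ℝ, Tendsto (fun n : ℕ => ∑ i ∈ Finset.Icc 2 n, E i * ψ ^ (n - i + 1))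
      atTop (nhds L) := by
  refine ⟨0, ?_⟩
  have hψ : |ψ| ≤ (7/10:ℝ) := psi_abs
  have hg : Tendsto (fun n : ℕ => 256 * (((n:ℝ)+1) * (7/10:ℝ)^(n+1))) atTop (nhds 0) := by
    have h := (tendsto_self_mul_const_pow_of_lt_one
      (by norm_num : (0:ℝ) ≤ 7/10) (by norm_num : (7/10:ℝ) < 1)).comp
      (tendsto_add_atTop_nat 1)
    have h2 : Tendsto (fun n : ℕ => ((n:ℝ)+1) * (7/10:ℝ)^(n+1)) atTop (nhds 0) := by
      refine h.congr fun n => ?_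
      simp [Function.comp]
    simpa using h2.const_mul 256
  apply squeeze_zero_norm _ hg
  intro n
  calc ‖∑ i ∈ Finset.Icc 2 n, E i * ψ ^ (n - i + 1)‖
      ≤ ∑ i ∈ Finset.Icc 2 n, ‖E i * ψ ^ (n - i + 1)‖ := norm_sum_le _ _
    _ ≤ ∑ _i ∈ Finset.Icc 2 n, 256 * (7/10:ℝ)^(n+1) := by
        apply Finset.sum_le_sum
        intro i hi
        obtain ⟨hi2, hin⟩ := Finset.mem_Icc.mp hi
        rw [norm_mul, norm_pow]
        have hE : ‖E i‖ ≤ 256 * (1/2:ℝ)^i := by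
          rw [Real.norm_eq_abs]; exact E_bound' i hi2
        have hE2 : ‖E i‖ ≤ 256 * (7/10:ℝ)^i :=
          le_trans hE (mul_le_mul_of_nonneg_left
            (pow_le_pow_left₀ (by norm_num) (by norm_num) i) (by norm_num))
        have hψp : ‖ψ‖^(n-i+1) ≤ (7/10:ℝ)^(n-i+1) :=
          pow_le_pow_left₀ (norm_nonneg _) (by rw [Real.norm_eq_abs]; exact hψ) _
        calc ‖E i‖ * ‖ψ‖^(n-i+1)
            ≤ (256*(7/10:ℝ)^i) * ((7/10:ℝ)^(n-i+1)) :=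
              mul_le_mul hE2 hψp (by positivity) (by positivity)
          _ = 256 * (7/10:ℝ)^(i + (n-i+1)) := by rw [pow_add]; ring
          _ = 256 * (7/10:ℝ)^(n+1) := by rw [show i + (n-i+1) = n+1 by omega]
    _ = ((Finset.Icc 2 n).card : ℝ) * (256 * (7/10:ℝ)^(n+1)) := by
        rw [Finset.sum_const, nsmul_eq_mul]
    _ ≤ 256 * (((n:ℝ)+1) * (7/10:ℝ)^(n+1)) := by
        have hc : ((Finset.Icc 2 n).card : ℝ) ≤ (n:ℝ)+1 := by
          rw [Nat.card_Icc]
          have : (n + 1 - 2 : ℕ) ≤ n + 1 := by omega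
          exact_mod_cast this
        have hp : (0:ℝ) ≤ 256 * (7/10:ℝ)^(n+1) := by positivity
        calc ((Finset.Icc 2 n).card : ℝ) * (256 * (7/10:ℝ)^(n+1))
            ≤ ((n:ℝ)+1) * (256 * (7/10:ℝ)^(n+1)) :=
              mul_le_mul_of_nonneg_right hc hp
          _ = 256 * (((n:ℝ)+1) * (7/10:ℝ)^(n+1)) := by ring
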